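/- Let s₁ be the segment from (−1,0) to (1,0) and s₂ the segment from (0,−1) to (0,1). Any segment s minimizing d_H(s,s₁)² + d_H(s,s₂)² must contain the origin. -/

import Mathlib

noncomputable abbrev E2 : Type := EuclideanSpace ℝ (Fin 2)

noncomputable def crossCost (a b : E2) : ℝ :=
  Metric.hausdorffDist (segment ℝ a b) (segment ℝ (!₂[(-1 : ℝ), 0] : E2) (!₂[(1 : ℝ), 0] : E2)) ^ 2 +
    Metric.hausdorffDist (segment ℝ a b) (segment ℝ (!₂[(0 : ℝ), -1] : E2) (!₂[(0 : ℝ), 1] : E2)) ^ 2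

namespace FrechetAux

open Metric

noncomputable def A : E2 := !₂[(-1 : ℝ), 0]
noncomputable def B : E2 := !₂[(1 : ℝ), 0]
noncomputable def C : E2 := !₂[(0 : ℝ), -1]
noncomputable def D : E2 := !₂[(0 : ℝ), 1]

noncomputable def T1 : Set E2 := segment ℝ A B
noncomputable def T2 : Set E2 := segment ℝ C D

lemma A0 : A 0 = -1 := rfl
lemma A1 : A 1 = 0 := rfl
lemma B0 : B 0 = 1 := rfl
lemma B1 : B 1 = 0 := rfl
lemma C0 : C 0 = 0 := rfl
lemma C1 : C 1 = -1 := rfl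
lemma D0 : D 0 = 0 := rfl
lemma D1 : D 1 = 1 := rfl

lemma smul_add_coord (α β : ℝ) (x y : E2) (i : Fin 2) :
    (α • x + β • y) i = α * x i + β * y i := by
  simp [PiLp.add_apply, PiLp.smul_apply]

lemma crossCost_eq (a b : E2) :
    crossCost a b = Metric.hausdorffDist (segment ℝ a b) T1 ^ 2 +
      Metric.hausdorffDist (segment ℝ a b) T2 ^ 2 := rfl

lemma coord_le_dist (p q : E2) (i : Fin 2) : |p i - q i| ≤ dist p q := by
  rw [EuclideanSpace.dist_eq]
  have h : dist (p i) (q i) ^ 2 ≤ ∑ j, dist (p j) (q j) ^ 2 :=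
    Finset.single_le_sum (f := fun j => dist (p j) (q j) ^ 2)
      (fun j _ => sq_nonneg _) (Finset.mem_univ i)
  rw [← Real.dist_eq]
  exact (Real.le_sqrt dist_nonneg (by positivity)).mpr h

lemma seg_compact (a b : E2) : IsCompact (segment ℝ a b) := by
  rw [segment_eq_image']
  exact isCompact_Icc.image (by continuity)

lemma inner_two (x y : E2) : (inner ℝ x y : ℝ) = x 0 * y 0 + x 1 * y 1 := by
  simp [PiLp.inner_apply, Fin.sum_univ_two, RCLike.inner_apply, conj_trivial]
  ring

lemma dist_zero_le_one (z : E2) (h : z 0 ^ 2 + z 1 ^ 2 ≤ 1) : dist z 0 ≤ 1 := by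
  rw [EuclideanSpace.dist_eq, Fin.sum_univ_two]
  apply Real.sqrt_le_one.mpr
  simpa [Real.dist_eq, sq_abs] using h

lemma zero_mem_T1 : (0 : E2) ∈ T1 := by
  refine ⟨1/2, 1/2, by norm_num, by norm_num, by norm_num, ?_⟩
  ext i; fin_cases i <;> simp [A, B]

lemma zero_mem_T2 : (0 : E2) ∈ T2 := by
  refine ⟨1/2, 1/2, by norm_num, by norm_num, by norm_num, ?_⟩
  ext i; fin_cases i <;> simp [C, D]

lemma mem_T1_coords {z : E2} (hz : z ∈ T1) : z 1 = 0 ∧ |z 0| ≤ 1 := by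
  obtain ⟨α, β, hα, hβ, hαβ, rfl⟩ := hz
  constructor
  · rw [smul_add_coord, A1, B1]; ring
  · have h0 : (α • A + β • B) 0 = β - α := by
      rw [smul_add_coord, A0, B0]; ring
    rw [h0, abs_le]; constructor <;> linarith

lemma mem_T2_coords {z : E2} (hz : z ∈ T2) : z 0 = 0 ∧ |z 1| ≤ 1 := by
  obtain ⟨α, β, hα, hβ, hαβ, rfl⟩ := hz
  constructor
  · rw [smul_add_coord, C0, D0]; ring
  · have h0 : (α • C + β • D) 1 = β - α := by
      rw [smul_add_coord, C1, D1]; ring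
    rw [h0, abs_le]; constructor <;> linarith

lemma hdistT1T2_le_one : Metric.hausdorffDist T1 T2 ≤ 1 := by
  apply hausdorffDist_le_of_mem_dist zero_le_one
  · intro x hx
    refine ⟨0, zero_mem_T2, ?_⟩
    obtain ⟨h1, h0⟩ := mem_T1_coords hx
    apply dist_zero_le_one
    have := abs_le.mp h0
    nlinarith
  · intro x hx
    refine ⟨0, zero_mem_T1, ?_⟩
    obtain ⟨h0, h1⟩ := mem_T2_coords hx
    apply dist_zero_le_one
    have := abs_le.mp h1
    nlinarith

lemma costAB_le_one : crossCost A B ≤ 1 := by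
  rw [crossCost_eq]
  have h1 : segment ℝ A B = T1 := rfl
  rw [h1, Metric.hausdorffDist_self_zero]
  have h := hdistT1T2_le_one
  have h0 := Metric.hausdorffDist_nonneg (s := T1) (t := T2)
  nlinarith

set_option maxHeartbeats 1000000 in
lemma key (a b : E2) (hub : crossCost a b ≤ 1) : (0 : E2) ∈ segment ℝ a b := by
  classical
  rw [crossCost_eq] at hub
  set s : Set E2 := segment ℝ a b with hsdef
  set u : ℝ := Metric.hausdorffDist s T1 with hudef
  set v : ℝ := Metric.hausdorffDist s T2 with hvdef
  have hu0 : 0 ≤ u := Metric.hausdorffDist_nonneg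
  have hv0 : 0 ≤ v := Metric.hausdorffDist_nonneg
  have hsum : u ^ 2 + v ^ 2 ≤ 1 := hub
  have hule : u ≤ 1 := by nlinarith
  have hvle : v ≤ 1 := by nlinarith
  have hsne : s.Nonempty := ⟨a, left_mem_segment ℝ a b⟩
  have hT1ne : T1.Nonempty := ⟨A, left_mem_segment ℝ A B⟩
  have hT2ne : T2.Nonempty := ⟨C, left_mem_segment ℝ C D⟩
  have hsc : IsCompact s := seg_compact a b
  have h1c : IsCompact T1 := seg_compact A B
  have h2c : IsCompact T2 := seg_compact C D
  have hfin1 : Metric.hausdorffEDist s T1 ≠ ⊤ :=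
    hausdorffEdist_ne_top_of_nonempty_of_bounded hsne hT1ne hsc.isBounded h1c.isBounded
  have hfin2 : Metric.hausdorffEDist s T2 ≠ ⊤ :=
    hausdorffEdist_ne_top_of_nonempty_of_bounded hsne hT2ne hsc.isBounded h2c.isBounded
  -- witnesses near points of T1 and T2
  have wit1 : ∀ w ∈ T1, ∃ p ∈ s, dist w p ≤ u := by
    intro w hw
    obtain ⟨p, hp, hpe⟩ := hsc.exists_infDist_eq_dist hsne w
    refine ⟨p, hp, ?_⟩
    rw [← hpe]
    calc infDist w s ≤ hausdorffDist T1 s :=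
          infDist_le_hausdorffDist_of_mem hw (by rwa [Metric.hausdorffEDist_comm] at hfin1)
      _ = u := by rw [hausdorffDist_comm]
  have wit2 : ∀ w ∈ T2, ∃ p ∈ s, dist w p ≤ v := by
    intro w hw
    obtain ⟨p, hp, hpe⟩ := hsc.exists_infDist_eq_dist hsne w
    refine ⟨p, hp, ?_⟩
    rw [← hpe]
    calc infDist w s ≤ hausdorffDist T2 s :=
          infDist_le_hausdorffDist_of_mem hw (by rwa [Metric.hausdorffEDist_comm] at hfin2)
      _ = v := by rw [hausdorffDist_comm]
  obtain ⟨pA, hpA, hpAd⟩ := wit1 A (left_mem_segment ℝ A B)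
  obtain ⟨pB, hpB, hpBd⟩ := wit1 B (right_mem_segment ℝ A B)
  obtain ⟨qC, hqC, hqCd⟩ := wit2 C (left_mem_segment ℝ C D)
  obtain ⟨qD, hqD, hqDd⟩ := wit2 D (right_mem_segment ℝ C D)
  have hpA0 : pA 0 ≤ 0 := by
    have h1 : |(-1 : ℝ) - pA 0| ≤ dist A pA := coord_le_dist A pA 0
    have h2 := neg_abs_le ((-1 : ℝ) - pA 0)
    linarith
  have hpB0 : 0 ≤ pB 0 := by
    have h1 : |(1 : ℝ) - pB 0| ≤ dist B pB := coord_le_dist B pB 0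
    have h2 := le_abs_self ((1 : ℝ) - pB 0)
    linarith
  have hqC1 : qC 1 ≤ 0 := by
    have h1 : |(-1 : ℝ) - qC 1| ≤ dist C qC := coord_le_dist C qC 1
    have h2 := neg_abs_le ((-1 : ℝ) - qC 1)
    linarith
  have hqD1 : 0 ≤ qD 1 := by
    have h1 : |(1 : ℝ) - qD 1| ≤ dist D qD := coord_le_dist D qD 1
    have h2 := le_abs_self ((1 : ℝ) - qD 1)
    linarith
  -- intermediate value: points of s on each axis
  have hconn : IsPreconnected s := (convex_segment a b).isPreconnected
  have hf0 : ContinuousOn (fun p : E2 => p 0) s :=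
    (EuclideanSpace.proj (0 : Fin 2)).continuous.continuousOn
  have hf1 : ContinuousOn (fun p : E2 => p 1) s :=
    (EuclideanSpace.proj (1 : Fin 2)).continuous.continuousOn
  obtain ⟨z1, hz1s, hz10⟩ := hconn.intermediate_value hpA hpB hf0 ⟨hpA0, hpB0⟩
  obtain ⟨z2, hz2s, hz21⟩ := hconn.intermediate_value hqC hqD hf1 ⟨hqC1, hqD1⟩
  have hz10' : z1 0 = 0 := hz10
  have hz21' : z2 1 = 0 := hz21
  by_cases hx0 : z2 0 = 0
  · have hz : z2 = (0 : E2) := by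
      ext i; fin_cases i
      · exact hx0
      · exact hz21'
    rw [← hz]; exact hz2s
  by_cases hy0 : z1 1 = 0
  · have hz : z1 = (0 : E2) := by
      ext i; fin_cases i
      · exact hz10'
      · exact hy0
    rw [← hz]; exact hz1s
  exfalso
  -- the segment lies on the line with normal n = (z1 1, z2 0)
  set n : E2 := !₂[z1 1, z2 0] with hndef
  have hn0 : n 0 = z1 1 := by rw [hndef]; simp
  have hn1 : n 1 = z2 0 := by rw [hndef]; simp
  have hinn1 : (inner ℝ n z1 : ℝ) = z2 0 * z1 1 := by
    rw [inner_two, hn0, hn1, hz10']; ring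
  have hinn2 : (inner ℝ n z2 : ℝ) = z2 0 * z1 1 := by
    rw [inner_two, hn0, hn1, hz21']; ring
  have haff : ∀ t : ℝ, (inner ℝ n (a + t • (b - a)) : ℝ) =
      (inner ℝ n a : ℝ) + t * ((inner ℝ n b : ℝ) - (inner ℝ n a : ℝ)) := by
    intro t
    simp only [inner_add_right, inner_smul_right, inner_sub_right, conj_trivial,
      RCLike.star_def, starRingEnd_apply, star_trivial]
    try ring
  have hparam : ∀ p ∈ s, ∃ t : ℝ, a + t • (b - a) = p := by
    intro p hp
    rw [hsdef, segment_eq_image'] at hp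
    obtain ⟨t, _, hte⟩ := hp
    exact ⟨t, hte⟩
  obtain ⟨t1, ht1⟩ := hparam z1 hz1s
  obtain ⟨t2, ht2⟩ := hparam z2 hz2s
  have e1 : (inner ℝ n a : ℝ) + t1 * ((inner ℝ n b : ℝ) - (inner ℝ n a : ℝ)) = z2 0 * z1 1 := by
    rw [← haff t1, ht1, hinn1]
  have e2 : (inner ℝ n a : ℝ) + t2 * ((inner ℝ n b : ℝ) - (inner ℝ n a : ℝ)) = z2 0 * z1 1 := by
    rw [← haff t2, ht2, hinn2]
  have ht12 : t1 ≠ t2 := by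
    intro h
    apply hx0
    have : z1 = z2 := by rw [← ht1, ← ht2, h]
    rw [← this, hz10']
  have hd0 : (inner ℝ n b : ℝ) - (inner ℝ n a : ℝ) = 0 := by
    have h : (t1 - t2) * ((inner ℝ n b : ℝ) - (inner ℝ n a : ℝ)) = 0 := by linarith
    rcases mul_eq_zero.mp h with h | h
    · exact absurd (by linarith : t1 = t2) ht12
    · exact h
  have ha' : (inner ℝ n a : ℝ) = z2 0 * z1 1 := by
    rw [hd0] at e1; linarith
  have hline : ∀ p ∈ s, (inner ℝ n p : ℝ) = z2 0 * z1 1 := by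
    intro p hp
    obtain ⟨t, ht⟩ := hparam p hp
    rw [← ht, haff t, hd0, ha']; ring
  -- Cauchy–Schwarz estimates against the far endpoints
  have hCS : ∀ (w p : E2), p ∈ s → ∀ r : ℝ, dist w p ≤ r →
      |z2 0 * z1 1 - (inner ℝ n w : ℝ)| ≤ ‖n‖ * r := by
    intro w p hp r hr
    calc |z2 0 * z1 1 - (inner ℝ n w : ℝ)|
        = |(inner ℝ n (p - w) : ℝ)| := by rw [inner_sub_right, hline p hp]
      _ ≤ ‖n‖ * ‖p - w‖ := abs_real_inner_le_norm _ _
      _ = ‖n‖ * dist p w := by rw [dist_eq_norm]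
      _ ≤ ‖n‖ * r := by
          apply mul_le_mul_of_nonneg_left _ (norm_nonneg n)
          rw [dist_comm]; exact hr
  -- pick the far horizontal endpoint
  have hu' : |z1 1| * (|z2 0| + 1) ≤ ‖n‖ * u := by
    rcases Ne.lt_or_gt hx0 with hneg | hpos
    · -- z2 0 < 0 : use B = (1,0)
      have h := hCS B pB hpB u hpBd
      have hinnB : (inner ℝ n B : ℝ) = z1 1 := by
        rw [inner_two, hn0, hn1, B0, B1]; ring
      rw [hinnB] at h
      calc |z1 1| * (|z2 0| + 1) = |z2 0 * z1 1 - z1 1| := by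
            rw [show z2 0 * z1 1 - z1 1 = z1 1 * (z2 0 - 1) by ring, abs_mul]
            congr 1
            rw [abs_of_neg hneg, abs_of_neg (by linarith : z2 0 - 1 < 0)]
            ring
        _ ≤ ‖n‖ * u := h
    · -- 0 < z2 0 : use A = (-1,0)
      have h := hCS A pA hpA u hpAd
      have hinnA : (inner ℝ n A : ℝ) = -(z1 1) := by
        rw [inner_two, hn0, hn1, A0, A1]; ring
      rw [hinnA] at h
      calc |z1 1| * (|z2 0| + 1) = |z2 0 * z1 1 - -(z1 1)| := by
            rw [show z2 0 * z1 1 - -(z1 1) = z1 1 * (z2 0 + 1) by ring, abs_mul]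
            congr 1
            rw [abs_of_pos hpos, abs_of_pos (by linarith : (0:ℝ) < z2 0 + 1)]
        _ ≤ ‖n‖ * u := h
  have hv' : |z2 0| * (|z1 1| + 1) ≤ ‖n‖ * v := by
    rcases Ne.lt_or_gt hy0 with hneg | hpos
    · -- z1 1 < 0 : use D = (0,1)
      have h := hCS D qD hqD v hqDd
      have hinnD : (inner ℝ n D : ℝ) = z2 0 := by
        rw [inner_two, hn0, hn1, D0, D1]; ring
      rw [hinnD] at h
      calc |z2 0| * (|z1 1| + 1) = |z2 0 * z1 1 - z2 0| := by
            rw [show z2 0 * z1 1 - z2 0 = z2 0 * (z1 1 - 1) by ring, abs_mul]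
            congr 1
            rw [abs_of_neg hneg, abs_of_neg (by linarith : z1 1 - 1 < 0)]
            ring
        _ ≤ ‖n‖ * v := h
    · -- 0 < z1 1 : use C = (0,-1)
      have h := hCS C qC hqC v hqCd
      have hinnC : (inner ℝ n C : ℝ) = -(z2 0) := by
        rw [inner_two, hn0, hn1, C0, C1]; ring
      rw [hinnC] at h
      calc |z2 0| * (|z1 1| + 1) = |z2 0 * z1 1 - -(z2 0)| := by
            rw [show z2 0 * z1 1 - -(z2 0) = z2 0 * (z1 1 + 1) by ring, abs_mul]
            congr 1
            rw [abs_of_pos hpos, abs_of_pos (by linarith : (0:ℝ) < z1 1 + 1)]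
        _ ≤ ‖n‖ * v := h
  have hN : ‖n‖ ^ 2 = z1 1 ^ 2 + z2 0 ^ 2 := by
    rw [← real_inner_self_eq_norm_sq, inner_two, hn0, hn1]; ring
  have hx : 0 < |z2 0| := abs_pos.mpr hx0
  have hy : 0 < |z1 1| := abs_pos.mpr hy0
  have h1 : (|z1 1| * (|z2 0| + 1)) ^ 2 ≤ (‖n‖ * u) ^ 2 :=
    pow_le_pow_left₀ (by positivity) hu' 2
  have h2 : (|z2 0| * (|z1 1| + 1)) ^ 2 ≤ (‖n‖ * v) ^ 2 :=
    pow_le_pow_left₀ (by positivity) hv' 2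
  have hN' : ‖n‖ ^ 2 = |z1 1| ^ 2 + |z2 0| ^ 2 := by
    rw [hN, sq_abs, sq_abs]
  clear hu' hv' hCS hline ha' hd0 e1 e2 ht12 hinn1 hinn2 haff hparam
  clear hz10 hz21 hz10' hz21' hpA0 hpB0 hqC1 hqD1 hpAd hpBd hqCd hqDd
  clear wit1 wit2 hfin1 hfin2 hconn hf0 hf1 hsc h1c h2c hsne hT1ne hT2ne
  set X : ℝ := |z2 0| with hXdef
  set Y : ℝ := |z1 1| with hYdef
  have h1' : Y ^ 2 * (X + 1) ^ 2 ≤ ‖n‖ ^ 2 * u ^ 2 := by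
    calc Y ^ 2 * (X + 1) ^ 2 = (Y * (X + 1)) ^ 2 := by ring
      _ ≤ (‖n‖ * u) ^ 2 := h1
      _ = ‖n‖ ^ 2 * u ^ 2 := by ring
  have h2' : X ^ 2 * (Y + 1) ^ 2 ≤ ‖n‖ ^ 2 * v ^ 2 := by
    calc X ^ 2 * (Y + 1) ^ 2 = (X * (Y + 1)) ^ 2 := by ring
      _ ≤ (‖n‖ * v) ^ 2 := h2
      _ = ‖n‖ ^ 2 * v ^ 2 := by ring
  have hmul : ‖n‖ ^ 2 * (u ^ 2 + v ^ 2) ≤ ‖n‖ ^ 2 * 1 :=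
    mul_le_mul_of_nonneg_left hsum (sq_nonneg _)
  have hexp : ‖n‖ ^ 2 * (u ^ 2 + v ^ 2) = ‖n‖ ^ 2 * u ^ 2 + ‖n‖ ^ 2 * v ^ 2 := by ring
  have hfin : Y ^ 2 * (X + 1) ^ 2 + X ^ 2 * (Y + 1) ^ 2 ≤ Y ^ 2 + X ^ 2 := by
    have := hN'
    linarith
  have hpos : Y ^ 2 + X ^ 2 < Y ^ 2 * (X + 1) ^ 2 + X ^ 2 * (Y + 1) ^ 2 := by
    nlinarith [mul_pos (mul_pos hx hx) (mul_pos hy hy), mul_pos hx (mul_pos hy hy),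
      mul_pos (mul_pos hx hx) hy]
  linarith

end FrechetAux

/-- Any Fréchet mean of the two perpendicular unit-radius segments must contain the origin. -/
theorem frechet_mean_contains_origin (a b : E2)
    (hmin : ∀ a' b' : E2, crossCost a b ≤ crossCost a' b') :
    (0 : E2) ∈ segment ℝ a b := by
  apply FrechetAux.key
  exact le_trans (hmin FrechetAux.A FrechetAux.B) FrechetAux.costAB_le_one
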